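/- Let X ∈ ℍ^{M×N} admit a QSVD with singular values σ : Fin (min M N) → ℝ, and suppose X = U * Vᴴ for some quaternion matrices U ∈ ℍ^{M×d} and V ∈ ℍ^{N×d}. Then the quaternion nuclear norm of X is bounded by the bi-factor Frobenius surrogate: Σ_{i=1}^{min(M,N)} σ i ≤ ½·(Σ_{i,j} ‖U i j‖² + Σ_{i,j} ‖V i j‖²). -/

import Mathlib

noncomputable section

open Matrix

abbrev ℍ : Type := Quaternion ℝ

/-- The `M × N` rectangular diagonal quaternion matrix of `σ : Fin K → ℝ`:
entry `(i, j)` is `σ i` when `i` and `j` have equal numerical index (below `K`), else `0`. -/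
def rectDiag (M N : ℕ) {K : ℕ} (σ : Fin K → ℝ) : Matrix (Fin M) (Fin N) ℍ :=
  Matrix.of fun i j =>
    if h : (i : ℕ) = (j : ℕ) ∧ (i : ℕ) < K then ((σ ⟨i, h.2⟩ : ℝ) : ℍ) else 0

/-- A square quaternion matrix is unitary if `A * Aᴴ = Aᴴ * A = 1`. -/
def IsUnitary {n : ℕ} (A : Matrix (Fin n) (Fin n) ℍ) : Prop :=
  A * Aᴴ = 1 ∧ Aᴴ * A = 1

/-- `IsQSVD A U σ V` : `A = U * D * Vᴴ` is a quaternion singular value decomposition of `A`,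
with `U`, `V` unitary and `σ` a nonincreasing nonnegative family of singular values. -/
def IsQSVD {M N : ℕ} (A : Matrix (Fin M) (Fin N) ℍ)
    (U : Matrix (Fin M) (Fin M) ℍ) (σ : Fin (min M N) → ℝ)
    (V : Matrix (Fin N) (Fin N) ℍ) : Prop :=
  IsUnitary U ∧ IsUnitary V ∧ Antitone σ ∧ (∀ i, 0 ≤ σ i) ∧
    A = U * rectDiag M N σ * Vᴴ

/-- `A` admits a QSVD with singular values `σ`. -/
def HasQSVD {M N : ℕ} (A : Matrix (Fin M) (Fin N) ℍ) (σ : Fin (min M N) → ℝ) : Prop :=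
  ∃ U V, IsQSVD A U σ V

/-- The quaternion nuclear norm is bounded by the bi-factor Frobenius surrogate:
if `X = U * Vᴴ` then `∑ᵢ σᵢ(X) ≤ ½ (‖U‖_F² + ‖V‖_F²)`. -/
lemma re_sum {α : Type*} (s : Finset α) (f : α → ℍ) :
    (∑ x ∈ s, f x).re = ∑ x ∈ s, (f x).re := by
  induction s using Finset.cons_induction with
  | empty => simp; rfl
  | cons a s ha ih => simp [Finset.sum_cons, ih]

lemma norm_sq_eq_re_star_mul (q : ℍ) : ‖q‖ ^ 2 = (star q * q).re := by
  rw [Quaternion.star_mul_self, Quaternion.re_coe, sq, Quaternion.normSq_eq_norm_mul_self]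

lemma frob_eq_trace {m d : ℕ} (B : Matrix (Fin m) (Fin d) ℍ) :
    ∑ i, ∑ k, ‖B i k‖ ^ 2 = (Bᴴ * B).trace.re := by
  rw [Matrix.trace, Finset.sum_comm]
  simp only [Matrix.diag_apply, Matrix.mul_apply, Matrix.conjTranspose_apply, re_sum]
  exact Finset.sum_congr rfl fun k _ => Finset.sum_congr rfl fun i _ =>
    (norm_sq_eq_re_star_mul _).symm ▸ rfl

lemma frob_unitary {m d : ℕ} (W : Matrix (Fin m) (Fin m) ℍ) (hW : W * Wᴴ = 1)
    (A : Matrix (Fin m) (Fin d) ℍ) :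
    ∑ i, ∑ k, ‖(Wᴴ * A) i k‖ ^ 2 = ∑ i, ∑ k, ‖A i k‖ ^ 2 := by
  rw [frob_eq_trace, frob_eq_trace, conjTranspose_mul, conjTranspose_conjTranspose,
    Matrix.mul_assoc, ← Matrix.mul_assoc W, hW, Matrix.one_mul]

theorem qnn_le_bifactor_frobenius {M N d : ℕ} (X : Matrix (Fin M) (Fin N) ℍ)
    (σ : Fin (min M N) → ℝ) (hX : HasQSVD X σ)
    (U : Matrix (Fin M) (Fin d) ℍ) (V : Matrix (Fin N) (Fin d) ℍ)
    (hUV : X = U * Vᴴ) :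
    ∑ i, σ i ≤
      (1 / 2) * ((∑ i, ∑ j, ‖U i j‖ ^ 2) + ∑ i, ∑ j, ‖V i j‖ ^ 2) := by
  obtain ⟨W, Q, hW, hQ, -, -, hD⟩ := hX
  set A := Wᴴ * U with hA
  set B := Qᴴ * V with hB
  -- the diagonal matrix equals A * Bᴴ
  have hDeq : rectDiag M N σ = A * Bᴴ := by
    have h1 : Wᴴ * X * Q = rectDiag M N σ := by
      rw [hD, Matrix.mul_assoc W, ← Matrix.mul_assoc Wᴴ, hW.2, Matrix.one_mul,
        Matrix.mul_assoc, hQ.2, Matrix.mul_one]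
    rw [← h1, hUV, hA, hB, conjTranspose_mul, conjTranspose_conjTranspose]
    simp only [Matrix.mul_assoc]
  have key : ∀ i : Fin (min M N),
      σ i ≤ (1 / 2) * ((∑ k, ‖A (Fin.castLE (min_le_left M N) i) k‖ ^ 2) +
        ∑ k, ‖B (Fin.castLE (min_le_right M N) i) k‖ ^ 2) := by
    intro i
    set i₁ := Fin.castLE (min_le_left M N) i
    set i₂ := Fin.castLE (min_le_right M N) i
    have hval : rectDiag M N σ i₁ i₂ = ((σ i : ℝ) : ℍ) := dif_pos ⟨rfl, i.isLt⟩
    have hσ : σ i = ((A * Bᴴ) i₁ i₂).re := by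
      rw [← hDeq, hval, Quaternion.re_coe]
    rw [hσ]
    have : ((A * Bᴴ) i₁ i₂).re = ∑ k, (A i₁ k * star (B i₂ k)).re := by
      simp only [Matrix.mul_apply, Matrix.conjTranspose_apply, re_sum]
    rw [this]
    have hterm : ∀ k, (A i₁ k * star (B i₂ k)).re ≤
        (1 / 2) * (‖A i₁ k‖ ^ 2 + ‖B i₂ k‖ ^ 2) := by
      intro k
      have h1 : (A i₁ k * star (B i₂ k)).re ≤ ‖A i₁ k‖ * ‖B i₂ k‖ :=
        (Quaternion.inner_def (A i₁ k) (B i₂ k)) ▸ real_inner_le_norm (A i₁ k) (B i₂ k)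
      nlinarith [sq_nonneg (‖A i₁ k‖ - ‖B i₂ k‖), h1]
    calc ∑ k, (A i₁ k * star (B i₂ k)).re
        ≤ ∑ k, (1 / 2) * (‖A i₁ k‖ ^ 2 + ‖B i₂ k‖ ^ 2) :=
          Finset.sum_le_sum fun k _ => hterm k
      _ = (1 / 2) * ((∑ k, ‖A i₁ k‖ ^ 2) + ∑ k, ‖B i₂ k‖ ^ 2) := by
          rw [← Finset.sum_add_distrib, Finset.mul_sum]
  have emb_le : ∀ {m : ℕ} (h : min M N ≤ m) (g : Fin m → ℝ), (∀ j, 0 ≤ g j) →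
      ∑ i : Fin (min M N), g (Fin.castLE h i) ≤ ∑ j : Fin m, g j := by
    intro m h g hg
    have := Finset.sum_le_sum_of_subset_of_nonneg
      (Finset.subset_univ (Finset.univ.map (Fin.castLEEmb h)))
      (fun j _ _ => hg j)
    rwa [Finset.sum_map] at this
  have hAfrob : ∑ i, ∑ k, ‖A i k‖ ^ 2 = ∑ i, ∑ j, ‖U i j‖ ^ 2 := frob_unitary W hW.1 U
  have hBfrob : ∑ i, ∑ k, ‖B i k‖ ^ 2 = ∑ i, ∑ j, ‖V i j‖ ^ 2 := frob_unitary Q hQ.1 V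
  calc ∑ i, σ i
      ≤ ∑ i : Fin (min M N), (1 / 2) * ((∑ k, ‖A (Fin.castLE (min_le_left M N) i) k‖ ^ 2) +
          ∑ k, ‖B (Fin.castLE (min_le_right M N) i) k‖ ^ 2) :=
        Finset.sum_le_sum fun i _ => key i
    _ = (1 / 2) * ((∑ i : Fin (min M N), ∑ k, ‖A (Fin.castLE (min_le_left M N) i) k‖ ^ 2) +
          ∑ i : Fin (min M N), ∑ k, ‖B (Fin.castLE (min_le_right M N) i) k‖ ^ 2) := by
        rw [← Finset.mul_sum, Finset.sum_add_distrib]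
    _ ≤ (1 / 2) * ((∑ i, ∑ k, ‖A i k‖ ^ 2) + ∑ i, ∑ k, ‖B i k‖ ^ 2) := by
        have h1 := emb_le (min_le_left M N) (fun j => ∑ k, ‖A j k‖ ^ 2)
          (fun j => Finset.sum_nonneg fun k _ => by positivity)
        have h2 := emb_le (min_le_right M N) (fun j => ∑ k, ‖B j k‖ ^ 2)
          (fun j => Finset.sum_nonneg fun k _ => by positivity)
        have : (0:ℝ) ≤ 1/2 := by norm_num
        nlinarith [h1, h2]
    _ = (1 / 2) * ((∑ i, ∑ j, ‖U i j‖ ^ 2) + ∑ i, ∑ j, ‖V i j‖ ^ 2) := by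
        rw [hAfrob, hBfrob]
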